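/- Let (f_n) be a complete minimal sequence in H whose biorthogonal sequence is not complete in H. Then (f_n) is not a weighted frame for H, i.e., there is no sequence of positive weights (ω_n) such that (ω_n f_n) is a frame for H. -/

import Mathlib

open scoped ENNReal NNReal ComplexConjugate

/-- The Bessel-type sum `∑ₙ |⟨f, gₙ⟩|²` valued in `ℝ≥0∞`. -/
noncomputable def bSum {H : Type*} [NormedAddCommGroup H] [InnerProductSpace ℂ H]
    (g : ℕ → H) (f : H) : ℝ≥0∞ :=
  ∑' n, ((‖(inner ℂ f (g n) : ℂ)‖₊ : ℝ≥0∞)) ^ 2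

section Aux

variable {H : Type*} [NormedAddCommGroup H] [InnerProductSpace ℂ H]

/-- Finite-sum Bessel estimate: `‖∑ cₙ eₙ‖² ≤ B ∑ |cₙ|²` for a Bessel sequence. -/
lemma aux_finsum_est (e : ℕ → H) (B : ℝ) (hB : 0 ≤ B)
    (hsum : ∀ x : H, Summable (fun n => ‖(inner ℂ x (e n) : ℂ)‖ ^ 2))
    (hup : ∀ x : H, ∑' n, ‖(inner ℂ x (e n) : ℂ)‖ ^ 2 ≤ B * ‖x‖ ^ 2)
    (c : ℕ → ℂ) (t : Finset ℕ) :
    ‖∑ n ∈ t, c n • e n‖ ^ 2 ≤ B * ∑ n ∈ t, ‖c n‖ ^ 2 := by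
  set u := ∑ n ∈ t, c n • e n with hu
  have hcs : (0:ℝ) ≤ B * ∑ n ∈ t, ‖c n‖ ^ 2 := by positivity
  have key : ‖u‖ ^ 2 ≤ Real.sqrt (B * ∑ n ∈ t, ‖c n‖ ^ 2) * ‖u‖ := by
    have h1 : (‖u‖:ℝ) ^ 2 = RCLike.re (inner ℂ u u : ℂ) := (inner_self_eq_norm_sq u).symm
    have h2 : (inner ℂ u u : ℂ) = ∑ n ∈ t, conj (c n) * (inner ℂ (e n) u : ℂ) := by
      rw [hu, sum_inner]
      exact Finset.sum_congr rfl fun n _ => inner_smul_left _ _ _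
    have h3 : RCLike.re (inner ℂ u u : ℂ) ≤ ∑ n ∈ t, ‖c n‖ * ‖(inner ℂ (e n) u : ℂ)‖ := by
      calc RCLike.re (inner ℂ u u : ℂ) ≤ ‖(inner ℂ u u : ℂ)‖ := RCLike.re_le_norm _
        _ = ‖∑ n ∈ t, conj (c n) * (inner ℂ (e n) u : ℂ)‖ := by rw [h2]
        _ ≤ ∑ n ∈ t, ‖conj (c n) * (inner ℂ (e n) u : ℂ)‖ := norm_sum_le _ _
        _ = ∑ n ∈ t, ‖c n‖ * ‖(inner ℂ (e n) u : ℂ)‖ := by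
            exact Finset.sum_congr rfl fun n _ => by rw [norm_mul, RCLike.norm_conj]
    have h4 : ∑ n ∈ t, ‖c n‖ * ‖(inner ℂ (e n) u : ℂ)‖ ≤
        Real.sqrt ((∑ n ∈ t, ‖c n‖ ^ 2) * (∑ n ∈ t, ‖(inner ℂ (e n) u : ℂ)‖ ^ 2)) := by
      refine (Real.le_sqrt (by positivity) (by positivity)).2 ?_
      exact Finset.sum_mul_sq_le_sq_mul_sq t _ _
    have h5 : ∑ n ∈ t, ‖(inner ℂ (e n) u : ℂ)‖ ^ 2 ≤ B * ‖u‖ ^ 2 := by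
      have h51 : ∑ n ∈ t, ‖(inner ℂ (e n) u : ℂ)‖ ^ 2 = ∑ n ∈ t, ‖(inner ℂ u (e n) : ℂ)‖ ^ 2 := by
        exact Finset.sum_congr rfl fun n _ => by rw [norm_inner_symm]
      rw [h51]
      calc ∑ n ∈ t, ‖(inner ℂ u (e n) : ℂ)‖ ^ 2 ≤ ∑' n, ‖(inner ℂ u (e n) : ℂ)‖ ^ 2 :=
            Summable.sum_le_tsum t (fun i _ => by positivity) (hsum u)
        _ ≤ B * ‖u‖ ^ 2 := hup u
    have h6 : Real.sqrt ((∑ n ∈ t, ‖c n‖ ^ 2) * (∑ n ∈ t, ‖(inner ℂ (e n) u : ℂ)‖ ^ 2)) ≤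
        Real.sqrt ((∑ n ∈ t, ‖c n‖ ^ 2) * (B * ‖u‖ ^ 2)) := by
      apply Real.sqrt_le_sqrt
      exact mul_le_mul_of_nonneg_left h5 (by positivity)
    have h7 : Real.sqrt ((∑ n ∈ t, ‖c n‖ ^ 2) * (B * ‖u‖ ^ 2)) =
        Real.sqrt (B * ∑ n ∈ t, ‖c n‖ ^ 2) * ‖u‖ := by
      rw [show (∑ n ∈ t, ‖c n‖ ^ 2) * (B * ‖u‖ ^ 2) = (B * ∑ n ∈ t, ‖c n‖ ^ 2) * ‖u‖ ^ 2 by ring,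
        Real.sqrt_mul hcs, Real.sqrt_sq (norm_nonneg u)]
    calc ‖u‖ ^ 2 = RCLike.re (inner ℂ u u : ℂ) := h1
      _ ≤ ∑ n ∈ t, ‖c n‖ * ‖(inner ℂ (e n) u : ℂ)‖ := h3
      _ ≤ Real.sqrt ((∑ n ∈ t, ‖c n‖ ^ 2) * (∑ n ∈ t, ‖(inner ℂ (e n) u : ℂ)‖ ^ 2)) := h4
      _ ≤ Real.sqrt ((∑ n ∈ t, ‖c n‖ ^ 2) * (B * ‖u‖ ^ 2)) := h6
      _ = Real.sqrt (B * ∑ n ∈ t, ‖c n‖ ^ 2) * ‖u‖ := h7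
  rcases eq_or_lt_of_le (norm_nonneg u) with h0 | h0
  · rw [← h0]; simpa using hcs
  · have hle : ‖u‖ ≤ Real.sqrt (B * ∑ n ∈ t, ‖c n‖ ^ 2) := by
      have := key
      rw [sq] at this
      exact le_of_mul_le_mul_right this h0
    calc ‖u‖ ^ 2 ≤ Real.sqrt (B * ∑ n ∈ t, ‖c n‖ ^ 2) ^ 2 :=
          pow_le_pow_left₀ (norm_nonneg u) hle 2
      _ = B * ∑ n ∈ t, ‖c n‖ ^ 2 := Real.sq_sqrt hcs

lemma aux_summable [CompleteSpace H] (e : ℕ → H) (B : ℝ) (hB : 0 ≤ B)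
    (hsum : ∀ x : H, Summable (fun n => ‖(inner ℂ x (e n) : ℂ)‖ ^ 2))
    (hup : ∀ x : H, ∑' n, ‖(inner ℂ x (e n) : ℂ)‖ ^ 2 ≤ B * ‖x‖ ^ 2)
    (c : ℕ → ℂ) (hc : Summable (fun n => ‖c n‖ ^ 2)) :
    Summable (fun n => c n • e n) := by
  rw [summable_iff_vanishing]
  intro V hV
  obtain ⟨ε, hε, hball⟩ := Metric.mem_nhds_iff.1 hV
  obtain ⟨s, hs⟩ := (summable_iff_vanishing.1 hc) (Metric.ball 0 (ε ^ 2 / (B + 1)))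
    (Metric.ball_mem_nhds _ (by positivity))
  refine ⟨s, fun t ht => hball ?_⟩
  have h1 := aux_finsum_est e B hB hsum hup c t
  have h2 := hs t ht
  rw [Metric.mem_ball, Real.dist_eq, sub_zero] at h2
  have h2' : ∑ n ∈ t, ‖c n‖ ^ 2 < ε ^ 2 / (B + 1) := lt_of_abs_lt h2
  rw [Metric.mem_ball, dist_zero_right]
  have h3 : ‖∑ n ∈ t, c n • e n‖ ^ 2 < ε ^ 2 := by
    have hnn : (0:ℝ) ≤ ∑ n ∈ t, ‖c n‖ ^ 2 := by positivity
    have : B * ∑ n ∈ t, ‖c n‖ ^ 2 < ε ^ 2 := by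
      calc B * ∑ n ∈ t, ‖c n‖ ^ 2 ≤ (B + 1) * ∑ n ∈ t, ‖c n‖ ^ 2 := by nlinarith
        _ < (B + 1) * (ε ^ 2 / (B + 1)) := by
            apply mul_lt_mul_of_pos_left h2' (by positivity)
        _ = ε ^ 2 := by field_simp
    linarith
  nlinarith [norm_nonneg (∑ n ∈ t, c n • e n)]

lemma aux_tsum_norm_le (e : ℕ → H) (B : ℝ) (hB : 0 ≤ B)
    (hsum : ∀ x : H, Summable (fun n => ‖(inner ℂ x (e n) : ℂ)‖ ^ 2))
    (hup : ∀ x : H, ∑' n, ‖(inner ℂ x (e n) : ℂ)‖ ^ 2 ≤ B * ‖x‖ ^ 2)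
    (c : ℕ → ℂ) (hc : Summable (fun n => ‖c n‖ ^ 2))
    {u : H} (hu : HasSum (fun n => c n • e n) u) :
    ‖u‖ ^ 2 ≤ B * ∑' n, ‖c n‖ ^ 2 := by
  have htend : Filter.Tendsto (fun t : Finset ℕ => ‖∑ n ∈ t, c n • e n‖ ^ 2)
      Filter.atTop (nhds (‖u‖ ^ 2)) := (hu.norm.pow 2)
  refine le_of_tendsto htend (Filter.Eventually.of_forall fun t => ?_)
  calc ‖∑ n ∈ t, c n • e n‖ ^ 2 ≤ B * ∑ n ∈ t, ‖c n‖ ^ 2 := aux_finsum_est e B hB hsum hup c t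
    _ ≤ B * ∑' n, ‖c n‖ ^ 2 :=
        mul_le_mul_of_nonneg_left (Summable.sum_le_tsum t (fun i _ => by positivity) hc) hB

end Aux

theorem stmt6 {H : Type*} [NormedAddCommGroup H] [InnerProductSpace ℂ H] [CompleteSpace H]
    [TopologicalSpace.SeparableSpace H] (hinf : ¬ FiniteDimensional ℂ H)
    (f : ℕ → H)
    (hcomplete : (Submodule.span ℂ (Set.range f)).topologicalClosure = ⊤)
    (hminimal : ∀ j : ℕ, f j ∉ (Submodule.span ℂ (f '' {i : ℕ | i ≠ j})).topologicalClosure)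
    (g : ℕ → H)
    (hbiorth : ∀ n m : ℕ, (inner ℂ (f n) (g m) : ℂ) = if n = m then 1 else 0)
    (hgnotcomplete : (Submodule.span ℂ (Set.range g)).topologicalClosure ≠ ⊤) :
    ¬ ∃ ω : ℕ → ℝ, (∀ n, 0 < ω n) ∧ ∃ A B : ℝ, 0 < A ∧ 0 < B ∧
      ∀ x : H, ENNReal.ofReal A * (‖x‖₊ : ℝ≥0∞) ^ 2
          ≤ bSum (fun n => ((ω n : ℝ) : ℂ) • f n) x ∧
        bSum (fun n => ((ω n : ℝ) : ℂ) • f n) x ≤ ENNReal.ofReal B * (‖x‖₊ : ℝ≥0∞) ^ 2 := by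
  rintro ⟨ω, hω, A, B, hA, hB, hframe⟩
  set e : ℕ → H := fun n => ((ω n : ℝ) : ℂ) • f n with he
  -- Real-valued frame bounds
  have hreal : ∀ x : H, Summable (fun n => ‖(inner ℂ x (e n) : ℂ)‖ ^ 2) ∧
      A * ‖x‖ ^ 2 ≤ ∑' n, ‖(inner ℂ x (e n) : ℂ)‖ ^ 2 ∧
      ∑' n, ‖(inner ℂ x (e n) : ℂ)‖ ^ 2 ≤ B * ‖x‖ ^ 2 := by
    intro x
    set a : ℕ → ℝ≥0 := fun n => ‖(inner ℂ x (e n) : ℂ)‖₊ ^ 2 with ha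
    have hb : bSum e x = ∑' n, (a n : ℝ≥0∞) := by
      unfold bSum; simp only [ha, ENNReal.coe_pow]
    have hfin : ENNReal.ofReal B * (‖x‖₊ : ℝ≥0∞) ^ 2 ≠ ⊤ :=
      ENNReal.mul_ne_top ENNReal.ofReal_ne_top (by simp)
    have hne : ∑' n, (a n : ℝ≥0∞) ≠ ⊤ := by
      rw [← hb]; exact ne_top_of_le_ne_top hfin (hframe x).2
    have hsa : Summable a := ENNReal.tsum_coe_ne_top_iff_summable.1 hne
    have hsr : Summable (fun n => ‖(inner ℂ x (e n) : ℂ)‖ ^ 2) := by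
      have := NNReal.summable_coe.2 hsa
      refine this.congr fun n => ?_
      simp [ha]
    have hcoe : bSum e x = ((∑' n, a n : ℝ≥0) : ℝ≥0∞) := by
      rw [hb, ENNReal.coe_tsum hsa]
    have htr : ∑' n, ‖(inner ℂ x (e n) : ℂ)‖ ^ 2 = ((∑' n, a n : ℝ≥0) : ℝ) := by
      rw [NNReal.coe_tsum]
      exact tsum_congr fun n => by simp [ha]
    have hkey : ENNReal.toReal (bSum e x) = ∑' n, ‖(inner ℂ x (e n) : ℂ)‖ ^ 2 := by
      rw [hcoe, ENNReal.coe_toReal, htr]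
    refine ⟨hsr, ?_, ?_⟩
    · have h1 := ENNReal.toReal_mono (by rw [hcoe]; exact ENNReal.coe_ne_top) (hframe x).1
      rw [hkey] at h1
      have h2 : (ENNReal.ofReal A * (‖x‖₊ : ℝ≥0∞) ^ 2).toReal = A * ‖x‖ ^ 2 := by
        rw [ENNReal.toReal_mul, ENNReal.toReal_ofReal hA.le, ENNReal.toReal_pow]; simp
      rwa [h2] at h1
    · have h1 := ENNReal.toReal_mono hfin (hframe x).2
      rw [hkey] at h1
      have h2 : (ENNReal.ofReal B * (‖x‖₊ : ℝ≥0∞) ^ 2).toReal = B * ‖x‖ ^ 2 := by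
        rw [ENNReal.toReal_mul, ENNReal.toReal_ofReal hB.le, ENNReal.toReal_pow]; simp
      rwa [h2] at h1
  have hsum : ∀ x : H, Summable (fun n => ‖(inner ℂ x (e n) : ℂ)‖ ^ 2) := fun x => (hreal x).1
  have hup : ∀ x : H, ∑' n, ‖(inner ℂ x (e n) : ℂ)‖ ^ 2 ≤ B * ‖x‖ ^ 2 := fun x => (hreal x).2.2
  have hlow : ∀ x : H, A * ‖x‖ ^ 2 ≤ ∑' n, ‖(inner ℂ x (e n) : ℂ)‖ ^ 2 := fun x => (hreal x).2.1
  -- pick a nonzero x orthogonal to all g m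
  set G := Submodule.span ℂ (Set.range g) with hG
  have hGbot : Gᗮ ≠ ⊥ := fun h => hgnotcomplete (Submodule.topologicalClosure_eq_top_iff.2 h)
  obtain ⟨x, hxG, hx0⟩ := (Submodule.ne_bot_iff _).1 hGbot
  have hxg : ∀ m, (inner ℂ (g m) x : ℂ) = 0 := fun m =>
    (Submodule.mem_orthogonal G x).1 hxG (g m) (Submodule.subset_span (Set.mem_range_self m))
  -- coefficients summability
  have hc2 : ∀ y : H, Summable (fun n => ‖(inner ℂ (e n) y : ℂ)‖ ^ 2) := fun y =>
    (hsum y).congr fun n => by rw [norm_inner_symm]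
  have hSsum : ∀ y : H, Summable (fun n => (inner ℂ (e n) y : ℂ) • e n) := fun y =>
    aux_summable e B hB.le hsum hup _ (hc2 y)
  -- frame operator
  let S : H →ₗ[ℂ] H :=
    { toFun := fun y => ∑' n, (inner ℂ (e n) y : ℂ) • e n
      map_add' := by
        intro y z
        rw [← Summable.tsum_add (hSsum y) (hSsum z)]
        exact tsum_congr fun n => by rw [inner_add_right, add_smul]
      map_smul' := by
        intro a y
        simp only [RingHom.id_apply]
        rw [← ((hSsum y).hasSum.const_smul a).tsum_eq]
        exact tsum_congr fun n => by rw [inner_smul_right, mul_smul] }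
  have hSdef : ∀ y : H, S y = ∑' n, (inner ℂ (e n) y : ℂ) • e n := fun y => rfl
  -- inner products against S y
  have hSy_inner : ∀ y z : H, (inner ℂ z (S y) : ℂ) =
      ∑' n, (inner ℂ (e n) y : ℂ) * (inner ℂ z (e n) : ℂ) := by
    intro y z
    have h := ((hSsum y).hasSum.mapL (innerSL ℂ z)).tsum_eq
    simp only [innerSL_apply_apply, inner_smul_right] at h
    rw [hSdef, ← h]
  -- ⟨y, S y⟩ = ∑ ‖⟨y,eₙ⟩‖²
  have hySy : ∀ y : H, (inner ℂ y (S y) : ℂ) = ((∑' n, ‖(inner ℂ y (e n) : ℂ)‖ ^ 2 : ℝ) : ℂ) := by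
    intro y
    rw [hSy_inner y y]
    have h := ((hsum y).hasSum.mapL Complex.ofRealCLM).tsum_eq
    simp only [Complex.ofRealCLM_apply] at h
    rw [← h]
    refine tsum_congr fun n => ?_
    have h1 : (inner ℂ y (e n) : ℂ) = conj (inner ℂ (e n) y : ℂ) := (inner_conj_symm _ _).symm
    rw [h1]
    rw [Complex.mul_conj]
    have : Complex.normSq (inner ℂ (e n) y : ℂ) = ‖(inner ℂ y (e n) : ℂ)‖ ^ 2 := by
      rw [norm_inner_symm, ← Complex.sq_norm]
    simp [this]
  -- lower bound for S
  have hSlow : ∀ y : H, A * ‖y‖ ≤ ‖S y‖ := by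
    intro y
    rcases eq_or_ne y 0 with rfl | hy0
    · simp
    have h1 : A * ‖y‖ ^ 2 ≤ ∑' n, ‖(inner ℂ y (e n) : ℂ)‖ ^ 2 := hlow y
    have h2 : (∑' n, ‖(inner ℂ y (e n) : ℂ)‖ ^ 2 : ℝ) = RCLike.re (inner ℂ y (S y) : ℂ) := by
      rw [hySy y]; simp
    have h3 : RCLike.re (inner ℂ y (S y) : ℂ) ≤ ‖(inner ℂ y (S y) : ℂ)‖ := RCLike.re_le_norm _
    have h4 : ‖(inner ℂ y (S y) : ℂ)‖ ≤ ‖y‖ * ‖S y‖ := norm_inner_le_norm _ _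
    rw [h2] at h1
    have hxy : A * ‖y‖ ^ 2 ≤ ‖y‖ * ‖S y‖ := by linarith
    have hy : 0 < ‖y‖ := norm_pos_iff.2 hy0
    nlinarith
  -- upper bound for S
  have hSup : ∀ y : H, ‖S y‖ ≤ B * ‖y‖ := by
    intro y
    have h1 : ‖S y‖ ^ 2 ≤ B * ∑' n, ‖(inner ℂ (e n) y : ℂ)‖ ^ 2 :=
      aux_tsum_norm_le e B hB.le hsum hup _ (hc2 y) (hSsum y).hasSum
    have h2 : (∑' n, ‖(inner ℂ (e n) y : ℂ)‖ ^ 2 : ℝ) = ∑' n, ‖(inner ℂ y (e n) : ℂ)‖ ^ 2 :=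
      tsum_congr fun n => by rw [norm_inner_symm]
    have h3 : ‖S y‖ ^ 2 ≤ B * (B * ‖y‖ ^ 2) := by
      rw [h2] at h1
      exact h1.trans (mul_le_mul_of_nonneg_left (hup y) hB.le)
    nlinarith [norm_nonneg (S y), norm_nonneg y, mul_nonneg hB.le (norm_nonneg y)]
  let Scl : H →L[ℂ] H := S.mkContinuous B hSup
  have hSclcoe : ∀ y, Scl y = S y := fun y => rfl
  -- closed range
  have hanti : AntilipschitzWith (A⁻¹.toNNReal) Scl := by
    apply Scl.antilipschitz_of_bound
    intro y
    have h := hSlow y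
    have hAinv : ((A⁻¹.toNNReal : ℝ≥0) : ℝ) = A⁻¹ := Real.coe_toNNReal _ (by positivity)
    rw [hAinv, hSclcoe]
    calc ‖y‖ = A⁻¹ * (A * ‖y‖) := by field_simp
      _ ≤ A⁻¹ * ‖S y‖ := mul_le_mul_of_nonneg_left h (by positivity)
  have hclosed : IsClosed (Set.range Scl) := hanti.isClosed_range Scl.uniformContinuous
  set K := LinearMap.range S with hK
  have hKset : (K : Set H) = Set.range Scl := by
    rw [hK, LinearMap.coe_range]; rfl
  have hKc : IsClosed (K : Set H) := hKset ▸ hclosed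
  haveI : CompleteSpace K := hKc.completeSpace_coe
  -- K = ⊤
  have hKtop : K = ⊤ := by
    rw [← Submodule.orthogonal_eq_bot_iff]
    rw [Submodule.eq_bot_iff]
    intro z hz
    have h1 : (inner ℂ (S z) z : ℂ) = 0 :=
      (Submodule.mem_orthogonal K z).1 hz (S z) (LinearMap.mem_range_self S z)
    have h2 : (inner ℂ z (S z) : ℂ) = 0 := by
      rw [← inner_conj_symm]
      rw [h1]; simp
    rw [hySy z] at h2
    have h3 : (∑' n, ‖(inner ℂ z (e n) : ℂ)‖ ^ 2 : ℝ) = 0 := by exact_mod_cast h2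
    have h4 : A * ‖z‖ ^ 2 ≤ 0 := h3 ▸ hlow z
    by_contra hz0
    have hzp : 0 < ‖z‖ := norm_pos_iff.2 hz0
    nlinarith [mul_pos hA (pow_pos hzp 2)]
  -- get y with S y = x
  have hxK : x ∈ K := hKtop ▸ Submodule.mem_top
  obtain ⟨y, hy⟩ := (LinearMap.mem_range).1 hxK
  -- biorthogonality forces all coefficients to vanish
  have hcoef : ∀ m, (inner ℂ (e m) y : ℂ) = 0 := by
    intro m
    have h1 : (inner ℂ (g m) x : ℂ) = 0 := hxg m
    rw [← hy, hSy_inner] at h1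
    have hterm : ∀ n, (inner ℂ (e n) y : ℂ) * (inner ℂ (g m) (e n) : ℂ) =
        if n = m then (inner ℂ (e m) y : ℂ) * (ω m : ℂ) else 0 := by
      intro n
      have h2 : (inner ℂ (g m) (e n) : ℂ) = (ω n : ℂ) * (inner ℂ (g m) (f n) : ℂ) :=
        inner_smul_right (g m) (f n) _
      have h3 : (inner ℂ (g m) (f n) : ℂ) = if n = m then 1 else 0 := by
        rw [← inner_conj_symm, hbiorth n m]
        split <;> simp
      rw [h2, h3]
      by_cases hnm : n = m
      · subst hnm; rw [if_pos rfl, if_pos rfl]; ring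
      · rw [if_neg hnm, if_neg hnm]; ring
    rw [tsum_congr hterm, tsum_eq_single m (fun n hn => if_neg hn), if_pos rfl] at h1
    have hωm : ((ω m : ℝ) : ℂ) ≠ 0 := by
      exact_mod_cast (hω m).ne'
    exact (mul_eq_zero.1 h1).resolve_right hωm
  -- hence y = 0, so x = 0, contradiction
  have hynorm : ∀ n, ‖(inner ℂ y (e n) : ℂ)‖ ^ 2 = 0 := by
    intro n
    rw [norm_inner_symm, hcoef n]
    simp
  have htz : (∑' n, ‖(inner ℂ y (e n) : ℂ)‖ ^ 2 : ℝ) = 0 := by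
    rw [tsum_congr hynorm]; simp
  have h4 : A * ‖y‖ ^ 2 ≤ 0 := htz ▸ hlow y
  have hy0 : y = 0 := by
    by_contra hz0
    have hzp : 0 < ‖y‖ := norm_pos_iff.2 hz0
    nlinarith [mul_pos hA (pow_pos hzp 2)]
  rw [hy0, map_zero] at hy
  exact hx0 hy.symm
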